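/- For all 0 < k < 2, J > 0 and M > 0 there exists a constant a ∈ (0,1), depending only on k, M and J, such that 𝓔(f,φ) ≥ aM for every admissible pair (f,φ). In particular the energy infimum is strictly positive: I^k_{M,J} > 0. -/

import Mathlib

open MeasureTheory Real Filter Topology
open scoped ENNReal

noncomputable section

/-- Euclidean 3-space. -/
abbrev E3 := EuclideanSpace ℝ (Fin 3)

/-- `φ` belongs to (a C¹ surrogate of) the space `D¹(ℝ³)`: it is continuously
differentiable, its gradient is square integrable and it vanishes at infinity in
the sense that `{|φ| > a}` has finite measure for every `a > 0`. -/
def IsPotential (φ : E3 → ℝ) : Prop :=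
  ContDiff ℝ 1 φ ∧ (∫⁻ x : E3, ENNReal.ofReal (‖gradient φ x‖ ^ 2)) < ⊤ ∧
    ∀ a : ℝ, 0 < a → volume {x : E3 | a < |φ x|} < ⊤

/-- `f ∈ Γ^k_{M,J}`: `f` is measurable, a.e. nonnegative, with `‖f‖_{L¹} = M` and
`‖f‖_{L^{1+1/k}} ≤ J` (in particular `f ∈ L¹ ∩ L^{1+1/k}`). -/
def InGamma (k M J : ℝ) (f : E3 → E3 → ℝ) : Prop :=
  Measurable (Function.uncurry f) ∧
  (∀ᵐ z : E3 × E3, 0 ≤ f z.1 z.2) ∧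
  (∫⁻ z : E3 × E3, ENNReal.ofReal (f z.1 z.2)) = ENNReal.ofReal M ∧
  eLpNorm (Function.uncurry f) (ENNReal.ofReal (1 + 1/k)) volume ≤ ENNReal.ofReal J

/-- Kinetic energy `E_kin(f,φ) = ∫∫ √(e^{2φ(x)}+|p|²) f(x,p) dp dx` (value in `[0,∞]`). -/
def kinE (f : E3 → E3 → ℝ) (φ : E3 → ℝ) : ℝ≥0∞ :=
  ∫⁻ z : E3 × E3, ENNReal.ofReal (Real.sqrt (Real.exp (2 * φ z.1) + ‖z.2‖ ^ 2) * f z.1 z.2)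

/-- Energy functional `𝓔(f,φ) = E_kin(f,φ) + (1/2)∫ |∇φ|²` (value in `[0,∞]`). -/
def energy (f : E3 → E3 → ℝ) (φ : E3 → ℝ) : ℝ≥0∞ :=
  kinE f φ + (∫⁻ x : E3, ENNReal.ofReal (‖gradient φ x‖ ^ 2)) / 2

/-- `(f,φ)` is admissible: `f ∈ Γ^k_{M,J}`, `φ` is a potential and
`∫∫ √(1+|p|²) f dp dx < ∞`. -/
def Admissible (k M J : ℝ) (f : E3 → E3 → ℝ) (φ : E3 → ℝ) : Prop :=
  InGamma k M J f ∧ IsPotential φ ∧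
  (∫⁻ z : E3 × E3, ENNReal.ofReal (Real.sqrt (1 + ‖z.2‖ ^ 2) * f z.1 z.2)) < ⊤

/-- The energy infimum `I^k_{M,J} = inf {𝓔(f,φ) : (f,φ) admissible}`. -/
def energyInf (k M J : ℝ) : ℝ≥0∞ :=
  sInf { e : ℝ≥0∞ | ∃ f φ, Admissible k M J f φ ∧ e = energy f φ }

section AuxLemmas
open Metric Set
open scoped NNReal
set_option maxHeartbeats 1000000

/-- A C¹ transition function: 1 below `c`, 0 above `d`, values in [0,1], bounded derivative. -/
lemma aux_transition (c d : ℝ) (hcd : c < d) :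
    ∃ χ : ℝ → ℝ, ∃ K : ℝ, ContDiff ℝ 1 χ ∧ (∀ t, t ≤ c → χ t = 1) ∧ (∀ t, d ≤ t → χ t = 0) ∧
      (∀ t, 0 ≤ χ t) ∧ (∀ t, χ t ≤ 1) ∧ 0 ≤ K ∧ (∀ t, |deriv χ t| ≤ K) := by
  set χ : ℝ → ℝ := fun t => Real.smoothTransition ((d - t) / (d - c)) with hχdef
  have hden : (0:ℝ) < d - c := by linarith
  have hC : ContDiff ℝ 1 χ := by
    exact Real.smoothTransition.contDiff.comp ((contDiff_const.sub contDiff_id).div_const _)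
  have h1 : ∀ t, t ≤ c → χ t = 1 := fun t ht =>
    Real.smoothTransition.one_of_one_le (by rw [le_div_iff₀ hden]; linarith)
  have h0 : ∀ t, d ≤ t → χ t = 0 := fun t ht =>
    Real.smoothTransition.zero_of_nonpos (by
      apply div_nonpos_of_nonpos_of_nonneg <;> linarith)
  have hderiv0 : ∀ t, t ∉ Set.Icc c d → deriv χ t = 0 := by
    intro t ht
    rw [Set.mem_Icc, not_and_or, not_le, not_le] at ht
    rcases ht with h | h
    · have : χ =ᶠ[𝓝 t] fun _ => 1 := by
        filter_upwards [Iio_mem_nhds h] with y hy using h1 y (le_of_lt hy)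
      rw [this.deriv_eq]; exact deriv_const _ _
    · have : χ =ᶠ[𝓝 t] fun _ => 0 := by
        filter_upwards [Ioi_mem_nhds h] with y hy using h0 y (le_of_lt hy)
      rw [this.deriv_eq]; exact deriv_const _ _
  have hcs : HasCompactSupport (deriv χ) :=
    HasCompactSupport.intro isCompact_Icc hderiv0
  have hcont : Continuous (deriv χ) := hC.continuous_deriv le_rfl
  obtain ⟨K0, hK0⟩ := hcs.exists_bound_of_continuous hcont
  refine ⟨χ, max K0 0, hC, h1, h0, fun t => Real.smoothTransition.nonneg _,
    fun t => Real.smoothTransition.le_one _, le_max_right _ _, fun t => ?_⟩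
  calc |deriv χ t| = ‖deriv χ t‖ := rfl
    _ ≤ K0 := hK0 t
    _ ≤ max K0 0 := le_max_left _ _

lemma aux_key (φ : E3 → ℝ) (hφ : ContDiff ℝ 1 φ)
    (χ ρ : ℝ → ℝ) (Kχ Kρ : ℝ)
    (hχC : ContDiff ℝ 1 χ) (hχ1 : ∀ t, t ≤ -1 → χ t = 1) (hχ0 : ∀ t, -(1/2) ≤ t → χ t = 0)
    (hχnn : ∀ t, 0 ≤ χ t) (hχle : ∀ t, χ t ≤ 1) (hKχ0 : 0 ≤ Kχ) (hKχ : ∀ t, |deriv χ t| ≤ Kχ)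
    (hρC : ContDiff ℝ 1 ρ) (hρ1 : ∀ t, t ≤ 0 → ρ t = 1) (hρ0 : ∀ t, 1 ≤ t → ρ t = 0)
    (hρnn : ∀ t, 0 ≤ ρ t) (hρle : ∀ t, ρ t ≤ 1) (hKρ0 : 0 ≤ Kρ) (hKρ : ∀ t, |deriv ρ t| ≤ Kρ)
    (m n : ℕ) (hn : 1 ≤ (n:ℝ)) (hmn : (m:ℝ) ≤ (n:ℝ)) :
    volume ({x : E3 | φ x < -1} ∩ ball 0 m) ^ (1/6 : ℝ) ≤
      (MeasureTheory.eLpNormLESNormFDerivOfEqInnerConst (volume : Measure E3) ((2:ℝ≥0):ℝ) : ℝ≥0∞) *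
        (ENNReal.ofReal Kρ * (volume ({x : E3 | φ x ≤ -(1/2)} \ ball 0 n)) ^ (1/2:ℝ) +
         ENNReal.ofReal Kχ * (∫⁻ x : E3, (ENNReal.ofReal ‖fderiv ℝ φ x‖) ^ (2:ℝ)) ^ (1/2:ℝ)) := by
  have hn0 : (0:ℝ) < n := lt_of_lt_of_le one_pos hn
  set ν : E3 → ℝ := fun x => ρ (‖x‖ - n) with hνdef
  set ψ : E3 → ℝ := fun x => χ (φ x) with hψdef
  set u : E3 → ℝ := fun x => ν x * ψ x with hudef
  have hφd : Differentiable ℝ φ := hφ.differentiable one_ne_zero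
  -- ν basics
  have hν1 : ∀ x : E3, ‖x‖ < n → ν x = 1 := fun x hx => hρ1 _ (by linarith)
  have hνnn : ∀ x, 0 ≤ ν x := fun x => hρnn _
  have hνle : ∀ x, ν x ≤ 1 := fun x => hρle _
  have hνC : ContDiff ℝ 1 ν := by
    rw [contDiff_iff_contDiffAt]
    intro x
    by_cases hx : ‖x‖ < n
    · have hopen : IsOpen {y : E3 | ‖y‖ < n} := isOpen_lt continuous_norm continuous_const
      have hev : ν =ᶠ[𝓝 x] fun _ => (1:ℝ) := by
        filter_upwards [hopen.mem_nhds hx] with y hy using hν1 y hy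
      exact ContDiffAt.congr_of_eventuallyEq contDiffAt_const hev
    · have hx0 : x ≠ 0 := by
        intro h; rw [h, norm_zero] at hx; exact hx hn0
      exact (hρC.contDiffAt).comp x
        (((contDiffAt_norm ℝ hx0).sub contDiffAt_const))
  have hνd : Differentiable ℝ ν := hνC.differentiable one_ne_zero
  have hνfd0 : ∀ x : E3, ‖x‖ < n → fderiv ℝ ν x = 0 := by
    intro x hx
    have hopen : IsOpen {y : E3 | ‖y‖ < n} := isOpen_lt continuous_norm continuous_const
    have hev : ν =ᶠ[𝓝 x] fun _ => (1:ℝ) := by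
      filter_upwards [hopen.mem_nhds hx] with y hy using hν1 y hy
    rw [hev.fderiv_eq]; exact fderiv_const_apply _
  have hνlip : LipschitzWith Kρ.toNNReal ν := by
    have hρlip : LipschitzWith Kρ.toNNReal ρ := by
      apply lipschitzWith_of_nnnorm_fderiv_le (hρC.differentiable one_ne_zero)
      intro x
      rw [← NNReal.coe_le_coe, coe_nnnorm, Real.coe_toNNReal _ hKρ0,
        ← norm_deriv_eq_norm_fderiv, Real.norm_eq_abs]
      exact hKρ x
    have hbase : LipschitzWith 1 (fun x : E3 => ‖x‖ - n) := by
      apply LipschitzWith.of_dist_le_mul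
      intro x y
      rw [Real.dist_eq, NNReal.coe_one, one_mul, sub_sub_sub_cancel_right, dist_eq_norm]
      exact abs_norm_sub_norm_le _ _
    have h := hρlip.comp hbase; rw [mul_one] at h; exact h
  have hνbd : ∀ x, ‖fderiv ℝ ν x‖ ≤ Kρ := by
    intro x
    have := norm_fderiv_le_of_lipschitz ℝ hνlip (x₀ := x)
    rwa [Real.coe_toNNReal _ hKρ0] at this
  have hνsupp : HasCompactSupport ν := by
    apply HasCompactSupport.intro (isCompact_closedBall (0:E3) (n+1))
    intro x hx
    simp only [mem_closedBall, dist_zero_right, not_le] at hx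
    exact hρ0 _ (by linarith)
  -- ψ basics
  have hψC : ContDiff ℝ 1 ψ := hχC.comp hφ
  have hψfd : ∀ x, HasFDerivAt ψ (deriv χ (φ x) • fderiv ℝ φ x) x := by
    intro x
    exact ((hχC.differentiable one_ne_zero (φ x)).hasDerivAt).comp_hasFDerivAt x
      (hφd x).hasFDerivAt
  have hψnn : ∀ x, 0 ≤ ψ x := fun x => hχnn _
  have hψle : ∀ x, ψ x ≤ 1 := fun x => hχle _
  -- u basics
  have huC : ContDiff ℝ 1 u := hνC.mul hψC
  have husupp : HasCompactSupport u := by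
    apply HasCompactSupport.intro (isCompact_closedBall (0:E3) (n+1))
    intro x hx
    have : ν x = 0 := by
      simp only [mem_closedBall, dist_zero_right, not_le] at hx
      exact hρ0 _ (by linarith)
    simp [hudef, this]
  have hufd : ∀ x, fderiv ℝ u x
      = ψ x • fderiv ℝ ν x + ν x • (deriv χ (φ x) • fderiv ℝ φ x) := by
    intro x
    rw [hudef]
    rw [fderiv_fun_mul (hνd x) ((hψfd x).differentiableAt)]
    rw [(hψfd x).fderiv]
    abel
  -- pointwise bound on the derivative
  set T : Set E3 := {x : E3 | φ x ≤ -(1/2)} with hTdef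
  have hTmeas : MeasurableSet T := (isClosed_le (hφ.continuous) continuous_const).measurableSet
  set g1 : E3 → ℝ≥0∞ := (T \ ball 0 n).indicator (fun _ => ENNReal.ofReal Kρ) with hg1
  set g2 : E3 → ℝ≥0∞ := fun x => ENNReal.ofReal Kχ * ENNReal.ofReal ‖fderiv ℝ φ x‖ with hg2
  have hterm2 : ∀ x, ‖ν x • (deriv χ (φ x) • fderiv ℝ φ x)‖ ≤ Kχ * ‖fderiv ℝ φ x‖ := by
    intro x
    rw [norm_smul, norm_smul]
    have h1 : ‖ν x‖ ≤ 1 := by rw [Real.norm_eq_abs, abs_of_nonneg (hνnn x)]; exact hνle x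
    have h2 : ‖deriv χ (φ x)‖ ≤ Kχ := hKχ _
    calc ‖ν x‖ * (‖deriv χ (φ x)‖ * ‖fderiv ℝ φ x‖)
        ≤ 1 * (Kχ * ‖fderiv ℝ φ x‖) := by
          apply mul_le_mul h1 _ (by positivity) one_pos.le
          exact mul_le_mul_of_nonneg_right h2 (norm_nonneg _)
      _ = Kχ * ‖fderiv ℝ φ x‖ := one_mul _
  have hptw : ∀ x, ENNReal.ofReal ‖fderiv ℝ u x‖ ≤ g1 x + g2 x := by
    intro x
    have hg2x : ENNReal.ofReal (Kχ * ‖fderiv ℝ φ x‖) = g2 x := by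
      rw [hg2, ENNReal.ofReal_mul hKχ0]
    by_cases hx : ‖x‖ < n
    · have : fderiv ℝ u x = ν x • (deriv χ (φ x) • fderiv ℝ φ x) := by
        rw [hufd x, hνfd0 x hx]; simp
      rw [this, ← hg2x]
      exact le_add_left (ENNReal.ofReal_le_ofReal (hterm2 x))
    · by_cases hT : φ x ≤ -(1/2)
      · have hmem : x ∈ T \ ball 0 n := by
          constructor
          · exact hT
          · rw [mem_ball_zero_iff]; exact hx
        have hb : ‖fderiv ℝ u x‖ ≤ Kρ + Kχ * ‖fderiv ℝ φ x‖ := by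
          rw [hufd x]
          refine (norm_add_le _ _).trans (add_le_add ?_ (hterm2 x))
          rw [norm_smul]
          calc ‖ψ x‖ * ‖fderiv ℝ ν x‖ ≤ 1 * Kρ := by
                apply mul_le_mul _ (hνbd x) (norm_nonneg _) one_pos.le
                rw [Real.norm_eq_abs, abs_of_nonneg (hψnn x)]; exact hψle x
            _ = Kρ := one_mul _
        calc ENNReal.ofReal ‖fderiv ℝ u x‖ ≤ ENNReal.ofReal (Kρ + Kχ * ‖fderiv ℝ φ x‖) :=
              ENNReal.ofReal_le_ofReal hb
          _ = ENNReal.ofReal Kρ + ENNReal.ofReal (Kχ * ‖fderiv ℝ φ x‖) :=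
              ENNReal.ofReal_add hKρ0 (by positivity)
          _ = g1 x + g2 x := by rw [hg2x, hg1, Set.indicator_of_mem hmem]
      · have hψ0 : ψ x = 0 := hχ0 _ (by push_neg at hT; exact hT.le)
        have : fderiv ℝ u x = ν x • (deriv χ (φ x) • fderiv ℝ φ x) := by
          rw [hufd x, hψ0]; simp
        rw [this, ← hg2x]
        exact le_add_left (ENNReal.ofReal_le_ofReal (hterm2 x))
  have hfcont : Continuous (fderiv ℝ φ) := hφ.continuous_fderiv one_ne_zero
  have hwmeas : Measurable fun x : E3 => ENNReal.ofReal ‖fderiv ℝ φ x‖ :=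
    ENNReal.measurable_ofReal.comp hfcont.norm.measurable
  have hg1meas : Measurable g1 := measurable_const.indicator (hTmeas.diff measurableSet_ball)
  have hg2meas : Measurable g2 := hwmeas.const_mul _
  have hsob : eLpNorm u ((6:ℝ≥0) : ℝ≥0∞) volume ≤
      (MeasureTheory.eLpNormLESNormFDerivOfEqInnerConst (volume : Measure E3) ((2:ℝ≥0):ℝ) : ℝ≥0∞) *
        eLpNorm (fderiv ℝ u) ((2:ℝ≥0) : ℝ≥0∞) volume := by
    refine MeasureTheory.eLpNorm_le_eLpNorm_fderiv_of_eq_inner (p := 2) (p' := 6) volume huC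
      husupp ?_ ?_ ?_
    · norm_num
    · rw [finrank_euclideanSpace_fin]; norm_num
    · rw [finrank_euclideanSpace_fin]; norm_num
  have h6 : (((6:ℝ≥0)):ℝ≥0∞).toReal = 6 := by simp
  have h2 : (((2:ℝ≥0)):ℝ≥0∞).toReal = 2 := by simp
  have hLHS : volume ({x : E3 | φ x < -1} ∩ ball 0 m) ^ (1/6 : ℝ) ≤
      eLpNorm u ((6:ℝ≥0) : ℝ≥0∞) volume := by
    rw [eLpNorm_eq_lintegral_rpow_enorm_toReal (by norm_num) (by norm_num), h6]
    apply ENNReal.rpow_le_rpow _ (by norm_num : (0:ℝ) ≤ 1/6)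
    have hSmeas : MeasurableSet ({x : E3 | φ x < -1} ∩ ball 0 m) :=
      ((isOpen_lt hφ.continuous continuous_const).measurableSet).inter measurableSet_ball
    calc volume ({x : E3 | φ x < -1} ∩ ball 0 m)
        = ∫⁻ x in {x : E3 | φ x < -1} ∩ ball 0 m, 1 := (setLIntegral_one _).symm
      _ ≤ ∫⁻ x in {x : E3 | φ x < -1} ∩ ball 0 m, (‖u x‖₊ : ℝ≥0∞) ^ (6:ℝ) := by
          apply setLIntegral_mono' hSmeas
          intro x hx
          have hu1 : u x = 1 := by
            have h1 : ν x = 1 := hν1 x (lt_of_lt_of_le (mem_ball_zero_iff.mp hx.2) hmn)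
            have h2 : ψ x = 1 := hχ1 _ (le_of_lt hx.1)
            rw [hudef]; simp only []; rw [h1, h2, one_mul]
          rw [hu1]
          simp
      _ ≤ ∫⁻ x, (‖u x‖₊ : ℝ≥0∞) ^ (6:ℝ) := setLIntegral_le_lintegral _ _
  have hRHS : eLpNorm (fderiv ℝ u) ((2:ℝ≥0) : ℝ≥0∞) volume ≤
      ENNReal.ofReal Kρ * (volume (T \ ball 0 n)) ^ (1/2:ℝ) +
        ENNReal.ofReal Kχ * (∫⁻ x : E3, (ENNReal.ofReal ‖fderiv ℝ φ x‖) ^ (2:ℝ)) ^ (1/2:ℝ) := by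
    rw [eLpNorm_eq_lintegral_rpow_enorm_toReal (by norm_num) (by norm_num), h2]
    have hint1 : ∫⁻ x, g1 x ^ (2:ℝ) = ENNReal.ofReal Kρ ^ (2:ℝ) * volume (T \ ball 0 n) := by
      have hptg : ∀ x, g1 x ^ (2:ℝ) =
          (T \ ball 0 n).indicator (fun _ => ENNReal.ofReal Kρ ^ (2:ℝ)) x := by
        intro x
        by_cases hx : x ∈ T \ ball 0 n
        · rw [hg1]; rw [Set.indicator_of_mem hx, Set.indicator_of_mem hx]
        · rw [hg1]; rw [Set.indicator_of_notMem hx, Set.indicator_of_notMem hx]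
          exact ENNReal.zero_rpow_of_pos (by norm_num)
      rw [lintegral_congr hptg, lintegral_indicator (hTmeas.diff measurableSet_ball),
        setLIntegral_const]
    have hint2 : ∫⁻ x, g2 x ^ (2:ℝ) =
        ENNReal.ofReal Kχ ^ (2:ℝ) * ∫⁻ x, (ENNReal.ofReal ‖fderiv ℝ φ x‖) ^ (2:ℝ) := by
      have hptg : ∀ x, g2 x ^ (2:ℝ) =
          ENNReal.ofReal Kχ ^ (2:ℝ) * (ENNReal.ofReal ‖fderiv ℝ φ x‖) ^ (2:ℝ) := by
        intro x
        rw [hg2]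
        exact ENNReal.mul_rpow_of_nonneg _ _ (by norm_num)
      rw [lintegral_congr hptg, lintegral_const_mul _ (hwmeas.pow_const _)]
    have hcancel : ∀ c : ℝ≥0∞, (c ^ (2:ℝ)) ^ (1/2 : ℝ) = c := by
      intro c
      rw [← ENNReal.rpow_mul]
      norm_num
    calc (∫⁻ x, (‖fderiv ℝ u x‖₊ : ℝ≥0∞) ^ (2:ℝ)) ^ (1/(2:ℝ))
        ≤ (∫⁻ x, (g1 x + g2 x) ^ (2:ℝ)) ^ (1/(2:ℝ)) := by
          apply ENNReal.rpow_le_rpow _ (by norm_num : (0:ℝ) ≤ 1/2)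
          apply lintegral_mono
          intro x
          apply ENNReal.rpow_le_rpow _ (by norm_num : (0:ℝ) ≤ 2)
          rw [← enorm_eq_nnnorm, ← ofReal_norm]
          exact hptw x
      _ ≤ (∫⁻ x, g1 x ^ (2:ℝ)) ^ (1/(2:ℝ)) + (∫⁻ x, g2 x ^ (2:ℝ)) ^ (1/(2:ℝ)) :=
          ENNReal.lintegral_Lp_add_le hg1meas.aemeasurable hg2meas.aemeasurable one_le_two
      _ = ENNReal.ofReal Kρ * (volume (T \ ball 0 n)) ^ (1/2:ℝ) +
          ENNReal.ofReal Kχ * (∫⁻ x : E3, (ENNReal.ofReal ‖fderiv ℝ φ x‖) ^ (2:ℝ)) ^ (1/2:ℝ) := by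
          rw [hint1, hint2, ENNReal.mul_rpow_of_nonneg _ _ (by norm_num : (0:ℝ) ≤ 1/2),
            ENNReal.mul_rpow_of_nonneg _ _ (by norm_num : (0:ℝ) ≤ 1/2), hcancel, hcancel]
  calc volume ({x : E3 | φ x < -1} ∩ ball 0 m) ^ (1/6 : ℝ)
      ≤ eLpNorm u ((6:ℝ≥0) : ℝ≥0∞) volume := hLHS
    _ ≤ (MeasureTheory.eLpNormLESNormFDerivOfEqInnerConst (volume : Measure E3) ((2:ℝ≥0):ℝ) : ℝ≥0∞) *
        eLpNorm (fderiv ℝ u) ((2:ℝ≥0) : ℝ≥0∞) volume := hsob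
    _ ≤ _ := mul_le_mul_right hRHS _

lemma aux_capacity :
    ∃ C : ℝ≥0∞, C ≠ ⊤ ∧ ∀ φ : E3 → ℝ, ContDiff ℝ 1 φ →
      (∫⁻ x : E3, ENNReal.ofReal (‖gradient φ x‖ ^ 2)) ≠ ⊤ →
      (∀ a : ℝ, 0 < a → volume {x : E3 | a < |φ x|} < ⊤) →
      volume {x : E3 | φ x < -1} ≤
        C * (∫⁻ x : E3, ENNReal.ofReal (‖gradient φ x‖ ^ 2)) ^ (3:ℕ) := by
  obtain ⟨χ, Kχ, hχC, hχ1, hχ0, hχnn, hχle, hKχ0, hKχ⟩ :=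
    aux_transition (-1) (-(1/2)) (by norm_num)
  obtain ⟨ρ, Kρ, hρC, hρ1, hρ0, hρnn, hρle, hKρ0, hKρ⟩ := aux_transition 0 1 one_pos
  set Csob : ℝ≥0∞ :=
    (MeasureTheory.eLpNormLESNormFDerivOfEqInnerConst (volume : Measure E3) ((2:ℝ≥0):ℝ) : ℝ≥0∞)
    with hCsob
  have hCsobne : Csob ≠ ⊤ := ENNReal.coe_ne_top
  refine ⟨(Csob * ENNReal.ofReal Kχ) ^ (6:ℕ), ?_, ?_⟩
  · exact ENNReal.pow_ne_top (ENNReal.mul_ne_top hCsobne ENNReal.ofReal_ne_top)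
  intro φ hφC hDne hvan
  set D := ∫⁻ x : E3, ENNReal.ofReal (‖gradient φ x‖ ^ 2) with hD
  have hsq : ∀ r : ℝ, 0 ≤ r → ENNReal.ofReal (r ^ 2) = ENNReal.ofReal r ^ (2:ℝ) := by
    intro r hr
    rw [ENNReal.ofReal_pow hr, ← ENNReal.rpow_natCast]
    norm_num
  have hDfd : D = ∫⁻ x : E3, (ENNReal.ofReal ‖fderiv ℝ φ x‖) ^ (2:ℝ) := by
    apply lintegral_congr
    intro x
    have hgr : ‖gradient φ x‖ = ‖fderiv ℝ φ x‖ := by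
      rw [gradient]; exact LinearIsometryEquiv.norm_map _ _
    rw [hgr, hsq _ (norm_nonneg _)]
  set S : Set E3 := {x : E3 | φ x < -1} with hS
  set T : Set E3 := {x : E3 | φ x ≤ -(1/2)} with hT
  have hTmeas : MeasurableSet T := (isClosed_le hφC.continuous continuous_const).measurableSet
  have hTfin : volume T ≠ ⊤ := by
    refine ne_top_of_le_ne_top (hvan (1/4) (by norm_num)).ne (measure_mono ?_)
    intro x hx
    have : φ x ≤ -(1/2) := hx
    simp only [Set.mem_setOf_eq]
    rw [abs_of_nonpos (by linarith)]
    linarith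
  have htend : Filter.Tendsto (fun n : ℕ => volume (T \ ball (0:E3) (n:ℝ)))
      Filter.atTop (𝓝 0) := by
    have hanti : Antitone (fun n : ℕ => T \ ball (0:E3) (n:ℝ)) := by
      intro i j hij
      exact Set.diff_subset_diff_right (ball_subset_ball (by exact_mod_cast hij))
    have := tendsto_measure_iInter_atTop
      (μ := (volume : Measure E3)) (s := fun n : ℕ => T \ ball (0:E3) (n:ℝ))
      (fun n => (hTmeas.diff measurableSet_ball).nullMeasurableSet) hanti
      ⟨0, ne_top_of_le_ne_top hTfin (measure_mono Set.diff_subset)⟩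
    have hempty : ⋂ n : ℕ, (T \ ball (0:E3) (n:ℝ)) = ∅ := by
      ext x
      simp only [Set.mem_iInter, Set.mem_empty_iff_false, iff_false, not_forall]
      obtain ⟨n, hn⟩ := exists_nat_gt ‖x‖
      exact ⟨n, fun h => h.2 (mem_ball_zero_iff.mpr hn)⟩
    rwa [hempty, measure_empty] at this
  set L : ℝ≥0∞ := Csob * ENNReal.ofReal Kχ * D ^ (1/2:ℝ) with hL
  have hLne : L ≠ ⊤ := by
    apply ENNReal.mul_ne_top (ENNReal.mul_ne_top hCsobne ENNReal.ofReal_ne_top)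
    exact ENNReal.rpow_ne_top_of_nonneg (by norm_num) hDne
  have claim1 : ∀ m : ℕ, volume (S ∩ ball (0:E3) (m:ℝ)) ≤ L ^ (6:ℕ) := by
    intro m
    have h16 : volume (S ∩ ball (0:E3) (m:ℝ)) ^ (1/6:ℝ) ≤ L := by
      apply ENNReal.le_of_forall_pos_le_add
      intro ε hε hLlt
      set c : ℝ≥0∞ := Csob * ENNReal.ofReal Kρ with hc
      have hcne : c ≠ ⊤ := ENNReal.mul_ne_top hCsobne ENNReal.ofReal_ne_top
      -- find n large enough
      have hev : ∀ᶠ n : ℕ in Filter.atTop,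
          c * (volume (T \ ball (0:E3) (n:ℝ))) ^ (1/2:ℝ) ≤ (ε:ℝ≥0∞) := by
        by_cases hc0 : c = 0
        · filter_upwards with n
          rw [hc0, zero_mul]
          exact zero_le
        · have hδ : (0:ℝ≥0∞) < ((ε:ℝ≥0∞) / c) ^ (2:ℕ) := by
            apply ENNReal.pow_pos
            exact ENNReal.div_pos (by exact_mod_cast hε.ne') hcne
          filter_upwards [htend.eventually_lt_const hδ] with n hn
          have h1 : (volume (T \ ball (0:E3) (n:ℝ))) ^ (1/2:ℝ) ≤
              (((ε:ℝ≥0∞) / c) ^ (2:ℕ)) ^ (1/2:ℝ) :=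
            ENNReal.rpow_le_rpow hn.le (by norm_num)
          have h2 : ((((ε:ℝ≥0∞) / c) ^ (2:ℕ)) : ℝ≥0∞) ^ (1/2:ℝ) = (ε:ℝ≥0∞) / c := by
            rw [← ENNReal.rpow_natCast _ 2, ← ENNReal.rpow_mul]
            norm_num
          calc c * (volume (T \ ball (0:E3) (n:ℝ))) ^ (1/2:ℝ)
              ≤ c * ((ε:ℝ≥0∞) / c) := by rw [← h2]; exact mul_le_mul_right h1 _
            _ = (ε:ℝ≥0∞) := ENNReal.mul_div_cancel hc0 hcne
      obtain ⟨n, hn1, hn2⟩ := (hev.and (Filter.eventually_ge_atTop (max m 1))).exists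
      have hnm : (m:ℝ) ≤ (n:ℝ) := by
        exact_mod_cast le_trans (le_max_left m 1) hn2
      have hnn1 : (1:ℝ) ≤ (n:ℝ) := by
        exact_mod_cast le_trans (le_max_right m 1) hn2
      have hkey := aux_key φ hφC χ ρ Kχ Kρ hχC hχ1 hχ0 hχnn hχle hKχ0 hKχ
        hρC hρ1 hρ0 hρnn hρle hKρ0 hKρ m n hnn1 hnm
      rw [← hDfd] at hkey
      calc volume (S ∩ ball (0:E3) (m:ℝ)) ^ (1/6:ℝ)
          ≤ Csob * (ENNReal.ofReal Kρ * (volume (T \ ball (0:E3) (n:ℝ))) ^ (1/2:ℝ) +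
              ENNReal.ofReal Kχ * D ^ (1/2:ℝ)) := hkey
        _ = c * (volume (T \ ball (0:E3) (n:ℝ))) ^ (1/2:ℝ) + L := by
            rw [mul_add, hc, hL]; ring
        _ ≤ (ε:ℝ≥0∞) + L := add_le_add_left hn1 _
        _ = L + (ε:ℝ≥0∞) := add_comm _ _
    have hpow : volume (S ∩ ball (0:E3) (m:ℝ)) =
        (volume (S ∩ ball (0:E3) (m:ℝ)) ^ (1/6:ℝ)) ^ (6:ℝ) := by
      rw [← ENNReal.rpow_mul]
      norm_num
    calc volume (S ∩ ball (0:E3) (m:ℝ))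
        = (volume (S ∩ ball (0:E3) (m:ℝ)) ^ (1/6:ℝ)) ^ (6:ℝ) := hpow
      _ ≤ L ^ (6:ℝ) := ENNReal.rpow_le_rpow h16 (by norm_num)
      _ = L ^ (6:ℕ) := by rw [← ENNReal.rpow_natCast L 6]; norm_num
  have hUnion : ⋃ m : ℕ, (S ∩ ball (0:E3) (m:ℝ)) = S := by
    ext x
    simp only [Set.mem_iUnion]
    constructor
    · rintro ⟨m, hm⟩; exact hm.1
    · intro hx
      obtain ⟨m, hm⟩ := exists_nat_gt ‖x‖
      exact ⟨m, hx, mem_ball_zero_iff.mpr hm⟩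
  have hmono : Monotone (fun m : ℕ => S ∩ ball (0:E3) (m:ℝ)) := by
    intro i j hij
    exact Set.inter_subset_inter_right _ (ball_subset_ball (by exact_mod_cast hij))
  have hvolS : volume S ≤ L ^ (6:ℕ) := by
    have := tendsto_measure_iUnion_atTop (μ := (volume : Measure E3)) hmono
    rw [hUnion] at this
    exact le_of_tendsto' this claim1
  calc volume S ≤ L ^ (6:ℕ) := hvolS
    _ = (Csob * ENNReal.ofReal Kχ) ^ (6:ℕ) * D ^ (3:ℕ) := by
        rw [hL, mul_pow]
        congr 1
        rw [← ENNReal.rpow_natCast (D ^ (1/2:ℝ)) 6, ← ENNReal.rpow_mul,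
          ← ENNReal.rpow_natCast D 3]
        norm_num

end AuxLemmas

/-- there is `a ∈ (0,1)`, depending only on `k, M, J`, with
`𝓔(f,φ) ≥ aM` for every admissible pair; in particular `I^k_{M,J} > 0`. -/
theorem energyInf_pos (k M J : ℝ) (hk : 0 < k) (hk2 : k < 2) (hM : 0 < M) (hJ : 0 < J) :
    (∃ a : ℝ, 0 < a ∧ a < 1 ∧
      ∀ f φ, Admissible k M J f φ → ENNReal.ofReal (a * M) ≤ energy f φ)
    ∧ 0 < energyInf k M J := by
  obtain ⟨C, hCne, hC⟩ := aux_capacity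
  set c₁ : ℝ≥0∞ := volume (Metric.ball (0:E3) 1) with hc₁
  have hc₁ne : c₁ ≠ ⊤ := measure_ball_lt_top.ne
  set C₂ : ℝ≥0∞ := C * 8 * c₁ with hC₂
  have hC₂ne : C₂ ≠ ⊤ :=
    ENNReal.mul_ne_top (ENNReal.mul_ne_top hCne (by norm_num)) hc₁ne
  set θ : ℝ := 1/(1+k) with hθ
  have hθpos : 0 < θ := by rw [hθ]; positivity
  set c₄ : ℝ := (C₂ ^ θ).toReal with hc₄def
  have hc₄ : C₂ ^ θ = ENNReal.ofReal c₄ :=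
    (ENNReal.ofReal_toReal (ENNReal.rpow_ne_top_of_nonneg hθpos.le hC₂ne)).symm
  have hc₄nn : 0 ≤ c₄ := ENNReal.toReal_nonneg
  set g : ℝ → ℝ := fun ε => Real.exp 1 * ε + J * (c₄ * ε ^ (3/2 * θ)) + ε ^ (3/2:ℝ) with hg
  -- choose ε
  obtain ⟨ε, hεpos, hεM, hgε⟩ : ∃ ε : ℝ, 0 < ε ∧ ε < M ∧ g ε < M := by
    have hrpow : ∀ q : ℝ, 0 < q →
        Filter.Tendsto (fun ε : ℝ => ε ^ q) (nhdsWithin 0 (Set.Ioi 0)) (nhds 0) := by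
      intro q hq
      have := (Real.continuousAt_rpow_const 0 q (Or.inr hq.le)).tendsto
      rw [Real.zero_rpow hq.ne'] at this
      exact this.mono_left nhdsWithin_le_nhds
    have hid : Filter.Tendsto (fun ε : ℝ => ε) (nhdsWithin 0 (Set.Ioi 0)) (nhds 0) :=
      Filter.tendsto_id.mono_left nhdsWithin_le_nhds
    have htend : Filter.Tendsto g (nhdsWithin 0 (Set.Ioi 0)) (nhds 0) := by
      have h1 := (hid.const_mul (Real.exp 1)).add
        (((hrpow (3/2 * θ) (by positivity)).const_mul c₄).const_mul J)
      have h2 := h1.add (hrpow (3/2:ℝ) (by norm_num))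
      simpa only [mul_zero, add_zero] using h2
    have he1 : ∀ᶠ ε in nhdsWithin (0:ℝ) (Set.Ioi 0), g ε < M := htend.eventually_lt_const hM
    have he2 : ∀ᶠ ε in nhdsWithin (0:ℝ) (Set.Ioi 0), ε < M :=
      (gt_mem_nhds hM).filter_mono nhdsWithin_le_nhds
    have he3 : ∀ᶠ ε in nhdsWithin (0:ℝ) (Set.Ioi 0), ε ∈ Set.Ioi (0:ℝ) :=
      eventually_mem_nhdsWithin
    obtain ⟨ε, h1, h2, h3⟩ := (he1.and (he2.and he3)).exists
    exact ⟨ε, h3, h2, h1⟩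
  have hmain : ∀ f φ, Admissible k M J f φ → ENNReal.ofReal ε ≤ energy f φ := by
    intro f φ hadm
    by_contra hcon
    push_neg at hcon
    obtain ⟨⟨hfm, hf0, hfM, hfJ⟩, ⟨hφC, hφD, hφvan⟩, _hfin⟩ := hadm
    set F : E3 × E3 → ℝ≥0∞ := fun z => ENNReal.ofReal (f z.1 z.2) with hF
    have hFmeas : Measurable F := ENNReal.measurable_ofReal.comp hfm
    set K := kinE f φ with hK
    set Dg := ∫⁻ x : E3, ENNReal.ofReal (‖gradient φ x‖ ^ 2) with hDg
    have hKle : K ≤ ENNReal.ofReal ε := by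
      refine le_of_lt (lt_of_le_of_lt ?_ hcon)
      rw [energy]; exact le_self_add
    have hDle : Dg ≤ 2 * ENNReal.ofReal ε := by
      have h1 : Dg / 2 ≤ ENNReal.ofReal ε := by
        refine le_of_lt (lt_of_le_of_lt ?_ hcon)
        rw [energy]; exact le_add_self
      calc Dg = Dg / 2 * 2 := (ENNReal.div_mul_cancel (by norm_num) (by norm_num)).symm
        _ ≤ ENNReal.ofReal ε * 2 := mul_le_mul_left h1 _
        _ = 2 * ENNReal.ofReal ε := mul_comm _ _
    have hDne : Dg ≠ ⊤ := hφD.ne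
    set R : ℝ := ε ^ (-(1/2):ℝ) with hR
    have hRpos : 0 < R := Real.rpow_pos_of_pos hεpos _
    set A : Set (E3 × E3) := {z | -1 ≤ φ z.1} with hA
    have hAmeas : MeasurableSet A :=
      (isClosed_le continuous_const (hφC.continuous.comp continuous_fst)).measurableSet
    set B : Set (E3 × E3) := {z | ‖z.2‖ ≤ R} with hB
    have hBmeas : MeasurableSet B :=
      (isClosed_le continuous_snd.norm continuous_const).measurableSet
    set sQ : E3 × E3 → ℝ := fun z => Real.sqrt (Real.exp (2 * φ z.1) + ‖z.2‖ ^ 2) with hsQ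
    have hKdef : K = ∫⁻ z : E3 × E3, ENNReal.ofReal (sQ z * f z.1 z.2) := by
      rw [hK, kinE]
    have hboundA : ∫⁻ z in A, F z ≤ ENNReal.ofReal (Real.exp 1 * ε) := by
      have hpt : ∀ᵐ z : E3 × E3, z ∈ A →
          F z ≤ ENNReal.ofReal (Real.exp 1) * ENNReal.ofReal (sQ z * f z.1 z.2) := by
        filter_upwards [hf0] with z hz hzA
        rw [← ENNReal.ofReal_mul (Real.exp_pos 1).le]
        apply ENNReal.ofReal_le_ofReal
        have hsqrt : Real.exp (-1) ≤ sQ z := by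
          have h2 : Real.sqrt (Real.exp (2 * φ z.1)) = Real.exp (φ z.1) := by
            rw [show (2:ℝ) * φ z.1 = φ z.1 + φ z.1 by ring, Real.exp_add,
              Real.sqrt_mul_self (Real.exp_pos _).le]
          calc Real.exp (-1) ≤ Real.exp (φ z.1) := Real.exp_le_exp.mpr hzA
            _ = Real.sqrt (Real.exp (2 * φ z.1)) := h2.symm
            _ ≤ sQ z := Real.sqrt_le_sqrt (le_add_of_nonneg_right (by positivity))
        have hes : (1:ℝ) ≤ Real.exp 1 * sQ z := by
          have hmul := mul_le_mul_of_nonneg_left hsqrt (Real.exp_pos 1).le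
          calc (1:ℝ) = Real.exp 1 * Real.exp (-1) := by
                rw [← Real.exp_add]; norm_num
            _ ≤ Real.exp 1 * sQ z := hmul
        calc f z.1 z.2 = 1 * f z.1 z.2 := (one_mul _).symm
          _ ≤ (Real.exp 1 * sQ z) * f z.1 z.2 := mul_le_mul_of_nonneg_right hes hz
          _ = Real.exp 1 * (sQ z * f z.1 z.2) := by ring
      calc ∫⁻ z in A, F z
          ≤ ∫⁻ z in A, ENNReal.ofReal (Real.exp 1) * ENNReal.ofReal (sQ z * f z.1 z.2) :=
            setLIntegral_mono_ae' hAmeas hpt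
        _ = ENNReal.ofReal (Real.exp 1) *
            ∫⁻ z in A, ENNReal.ofReal (sQ z * f z.1 z.2) :=
            lintegral_const_mul' _ _ ENNReal.ofReal_ne_top
        _ ≤ ENNReal.ofReal (Real.exp 1) * K := by
            apply mul_le_mul_right
            rw [hKdef]
            exact setLIntegral_le_lintegral _ _
        _ ≤ ENNReal.ofReal (Real.exp 1) * ENNReal.ofReal ε := mul_le_mul_right hKle _
        _ = ENNReal.ofReal (Real.exp 1 * ε) := (ENNReal.ofReal_mul (Real.exp_pos 1).le).symm
    have hboundOut : ∫⁻ z in Aᶜ \ B, F z ≤ ENNReal.ofReal (ε ^ (3/2:ℝ)) := by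
      have hpt : ∀ᵐ z : E3 × E3, z ∈ Aᶜ \ B →
          ENNReal.ofReal R * F z ≤ ENNReal.ofReal (sQ z * f z.1 z.2) := by
        filter_upwards [hf0] with z hz hzmem
        have hznB : R < ‖z.2‖ := lt_of_not_ge (fun h => hzmem.2 h)
        have hsq : R ≤ sQ z := by
          calc R ≤ ‖z.2‖ := hznB.le
            _ = Real.sqrt (‖z.2‖^2) := (Real.sqrt_sq (norm_nonneg _)).symm
            _ ≤ sQ z := Real.sqrt_le_sqrt (le_add_of_nonneg_left (Real.exp_pos _).le)
        rw [← ENNReal.ofReal_mul hRpos.le]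
        apply ENNReal.ofReal_le_ofReal
        exact mul_le_mul_of_nonneg_right hsq hz
      have hstep : ENNReal.ofReal R * ∫⁻ z in Aᶜ \ B, F z ≤ ENNReal.ofReal ε := by
        calc ENNReal.ofReal R * ∫⁻ z in Aᶜ \ B, F z
            = ∫⁻ z in Aᶜ \ B, ENNReal.ofReal R * F z :=
              (lintegral_const_mul' _ _ ENNReal.ofReal_ne_top).symm
          _ ≤ ∫⁻ z in Aᶜ \ B, ENNReal.ofReal (sQ z * f z.1 z.2) :=
              setLIntegral_mono_ae' (hAmeas.compl.diff hBmeas) hpt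
          _ ≤ K := by rw [hKdef]; exact setLIntegral_le_lintegral _ _
          _ ≤ ENNReal.ofReal ε := hKle
      have hdiv : ∫⁻ z in Aᶜ \ B, F z ≤ ENNReal.ofReal ε / ENNReal.ofReal R := by
        rw [ENNReal.le_div_iff_mul_le (Or.inl (ENNReal.ofReal_pos.mpr hRpos).ne')
          (Or.inl ENNReal.ofReal_ne_top), mul_comm]
        exact hstep
      refine hdiv.trans (le_of_eq ?_)
      rw [← ENNReal.ofReal_div_of_pos hRpos]
      congr 1
      rw [hR, show ε / ε ^ (-(1/2):ℝ) = ε ^ (1:ℝ) / ε ^ (-(1/2):ℝ) by rw [Real.rpow_one],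
        ← Real.rpow_sub hεpos]
      norm_num
    have hWmeas : MeasurableSet (Aᶜ ∩ B) := hAmeas.compl.inter hBmeas
    have hWeq : Aᶜ ∩ B = {x : E3 | φ x < -1} ×ˢ Metric.closedBall (0:E3) R := by
      ext z
      simp only [Set.mem_inter_iff, Set.mem_compl_iff, Set.mem_prod, Set.mem_setOf_eq,
        Metric.mem_closedBall, dist_zero_right, hA, hB, not_le]
    have hvolW : volume (Aᶜ ∩ B) ≤ C₂ * ENNReal.ofReal (ε ^ (3/2:ℝ)) := by
      rw [hWeq]
      have hprod : volume ({x : E3 | φ x < -1} ×ˢ Metric.closedBall (0:E3) R) =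
          volume {x : E3 | φ x < -1} * volume (Metric.closedBall (0:E3) R) := by
        rw [MeasureTheory.Measure.volume_eq_prod, MeasureTheory.Measure.prod_prod]
      rw [hprod]
      have hS : volume {x : E3 | φ x < -1} ≤ C * Dg ^ (3:ℕ) := hC φ hφC hDne hφvan
      have hball : volume (Metric.closedBall (0:E3) R) = ENNReal.ofReal (R^(3:ℕ)) * c₁ := by
        rw [MeasureTheory.Measure.addHaar_closedBall _ _ hRpos.le, finrank_euclideanSpace_fin]
      have hDg3 : Dg ^ (3:ℕ) ≤ 8 * ENNReal.ofReal ε ^ (3:ℕ) := by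
        calc Dg ^ (3:ℕ) ≤ (2 * ENNReal.ofReal ε) ^ (3:ℕ) := pow_le_pow_left' hDle _
          _ = 8 * ENNReal.ofReal ε ^ (3:ℕ) := by rw [mul_pow]; norm_num
      calc volume {x : E3 | φ x < -1} * volume (Metric.closedBall (0:E3) R)
          ≤ (C * Dg ^ (3:ℕ)) * (ENNReal.ofReal (R^(3:ℕ)) * c₁) := by
            rw [hball]; exact mul_le_mul_left hS _
        _ ≤ (C * (8 * ENNReal.ofReal ε ^ (3:ℕ))) * (ENNReal.ofReal (R^(3:ℕ)) * c₁) := by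
            exact mul_le_mul_left (mul_le_mul_right hDg3 _) _
        _ = C₂ * (ENNReal.ofReal ε ^ (3:ℕ) * ENNReal.ofReal (R^(3:ℕ))) := by
            rw [hC₂]; ring
        _ = C₂ * ENNReal.ofReal (ε ^ (3/2:ℝ)) := by
            congr 1
            rw [← ENNReal.ofReal_pow hεpos.le, ← ENNReal.ofReal_mul (by positivity)]
            congr 1
            rw [hR, ← Real.rpow_natCast ε 3, ← Real.rpow_natCast (ε ^ (-(1/2):ℝ)) 3,
              ← Real.rpow_mul hεpos.le, ← Real.rpow_add hεpos]
            norm_num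
    have hq : (1 + 1/k).HolderConjugate (1 + k) := by
      constructor
      · rw [inv_eq_one_div, inv_eq_one_div, inv_one]
        field_simp
        ring
      · positivity
      · positivity
    have hboundW : ∫⁻ z in Aᶜ ∩ B, F z ≤ ENNReal.ofReal (J * (c₄ * ε ^ (3/2 * θ))) := by
      set ind : E3 × E3 → ℝ≥0∞ := (Aᶜ ∩ B).indicator (fun _ => 1) with hind
      have hindmeas : Measurable ind := measurable_const.indicator hWmeas
      have hI := ENNReal.lintegral_mul_le_Lp_mul_Lq volume hq hFmeas.aemeasurable
        hindmeas.aemeasurable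
      have hLHSeq : ∫⁻ z, F z * ind z = ∫⁻ z in Aᶜ ∩ B, F z := by
        rw [← lintegral_indicator hWmeas]
        apply lintegral_congr
        intro z
        by_cases hz : z ∈ Aᶜ ∩ B
        · rw [hind]; simp [Set.indicator_of_mem hz]
        · rw [hind]; simp [Set.indicator_of_notMem hz]
      have hterm1 : (∫⁻ z, F z ^ (1 + 1/k)) ^ (1/(1 + 1/k)) ≤ ENNReal.ofReal J := by
        have hpne : ENNReal.ofReal (1 + 1/k) ≠ 0 :=
          (ENNReal.ofReal_pos.mpr (by positivity)).ne'
        rw [eLpNorm_eq_lintegral_rpow_enorm_toReal hpne ENNReal.ofReal_ne_top,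
          ENNReal.toReal_ofReal (by positivity)] at hfJ
        refine le_trans (le_of_eq ?_) hfJ
        congr 1
        apply lintegral_congr_ae
        filter_upwards [hf0] with z hz
        congr 1
        rw [hF, ← ofReal_norm_eq_enorm]
        congr 1
        rw [Function.uncurry, Real.norm_eq_abs, abs_of_nonneg hz]
      have hterm2 : (∫⁻ z, ind z ^ (1 + k)) ^ (1/(1 + k)) =
          volume (Aᶜ ∩ B) ^ (1/(1 + k)) := by
        congr 1
        have hpt : ∀ z, ind z ^ (1+k) = ind z := by
          intro z
          rw [hind]
          by_cases hz : z ∈ Aᶜ ∩ B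
          · simp [Set.indicator_of_mem hz]
          · simp only [Set.indicator_of_notMem hz]
            exact ENNReal.zero_rpow_of_pos (by positivity)
        rw [lintegral_congr hpt, hind, lintegral_indicator hWmeas, setLIntegral_one]
      calc ∫⁻ z in Aᶜ ∩ B, F z = ∫⁻ z, F z * ind z := hLHSeq.symm
        _ ≤ (∫⁻ z, F z ^ (1 + 1/k)) ^ (1/(1 + 1/k)) *
            (∫⁻ z, ind z ^ (1 + k)) ^ (1/(1 + k)) := hI
        _ ≤ ENNReal.ofReal J * volume (Aᶜ ∩ B) ^ (1/(1+k)) := by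
            rw [hterm2]; exact mul_le_mul_left hterm1 _
        _ ≤ ENNReal.ofReal J * (C₂ * ENNReal.ofReal (ε ^ (3/2:ℝ))) ^ (1/(1+k)) := by
            exact mul_le_mul_right (ENNReal.rpow_le_rpow hvolW (by positivity)) _
        _ = ENNReal.ofReal (J * (c₄ * ε ^ (3/2 * θ))) := by
            rw [ENNReal.mul_rpow_of_nonneg _ _ (by positivity : (0:ℝ) ≤ 1/(1+k)), ← hθ,
              hc₄, ENNReal.ofReal_rpow_of_pos (Real.rpow_pos_of_pos hεpos _),
              ← Real.rpow_mul hεpos.le,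
              ← ENNReal.ofReal_mul hc₄nn, ← ENNReal.ofReal_mul hJ.le]
    have htotal : ENNReal.ofReal M ≤ ENNReal.ofReal (g ε) := by
      rw [← hfM]
      have hsplit : (∫⁻ z : E3 × E3, F z) =
          (∫⁻ z in A, F z) + ((∫⁻ z in Aᶜ ∩ B, F z) + (∫⁻ z in Aᶜ \ B, F z)) := by
        rw [lintegral_inter_add_diff F Aᶜ hBmeas, lintegral_add_compl F hAmeas]
      rw [hsplit]
      have hgeq : g ε = Real.exp 1 * ε + (J * (c₄ * ε ^ (3/2*θ)) + ε ^ (3/2:ℝ)) := by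
        rw [hg]; ring
      rw [hgeq, ENNReal.ofReal_add (by positivity) (by positivity),
        ENNReal.ofReal_add (by positivity) (by positivity)]
      exact add_le_add hboundA (add_le_add hboundW hboundOut)
    have hfin : M ≤ g ε := by
      rwa [ENNReal.ofReal_le_ofReal_iff (by positivity)] at htotal
    linarith

  refine ⟨⟨ε / M, div_pos hεpos hM, (div_lt_one hM).mpr hεM, fun f φ h => ?_⟩, ?_⟩
  · rw [div_mul_cancel₀ ε hM.ne']
    exact hmain f φ h
  · have hle : ENNReal.ofReal ε ≤ energyInf k M J := by
      apply le_sInf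
      rintro b ⟨f, φ, hfφ, rfl⟩
      exact hmain f φ hfφ
    exact lt_of_lt_of_le (ENNReal.ofReal_pos.mpr hεpos) hle
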